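/- Let L > 0, let M be a positive integer, and let s, t : Fin M → ℝ be tuples of points in [0, L]. Define F : ℝ → ℤ by F(y) = (#{i | s(i) < y} : ℤ) − (#{i | t(i) < y} : ℤ) and C : ℝ → ℝ by C(z) = ∫_{0}^{L} |F(y) + z| dy. Then C is piecewise affine with at most 2M + 2 linear pieces: there exist integers z₁ < z₂ < ⋯ < z_m with m ≤ 2M + 1 such that C is affine on (−∞, z₁], affine on [z_k, z_{k+1}] for each k < m, and affine on [z_m, ∞). -/

import Mathlib

open Finset MeasureTheory

private lemma bdd_intervalIntegrable (f : ℝ → ℝ) (hf : Measurable f) (B : ℝ)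
    (hB : ∀ y, |f y| ≤ B) (a b : ℝ) : IntervalIntegrable f volume a b := by
  rw [intervalIntegrable_iff]
  refine Integrable.mono' (g := fun _ => B)
    ((integrableOn_const_iff).2 (Or.inr measure_Ioc_lt_top)) hf.aestronglyMeasurable
    (Filter.Eventually.of_forall fun y => ?_)
  simpa [Real.norm_eq_abs] using hB y

private lemma affine_piece (φ : ℝ → ℤ) (hφ : Measurable φ) (B : ℤ) (hb : ∀ y, |φ y| ≤ B)
    (L : ℝ) (P : ℤ → Prop) [DecidablePred P] :
    ∃ α β : ℝ, ∀ x : ℝ,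
      (∀ y : ℝ, (P (φ y) → 0 ≤ (φ y : ℝ) + x) ∧ (¬ P (φ y) → (φ y : ℝ) + x ≤ 0)) →
      (∫ y in (0:ℝ)..L, |(φ y : ℝ) + x|) = α + β * x := by
  set g : ℝ → ℝ := fun y => if P (φ y) then (φ y : ℝ) else -(φ y : ℝ) with hg
  set h : ℝ → ℝ := fun y => if P (φ y) then (1:ℝ) else -1 with hh
  have hgm : Measurable g := by
    have : g = (fun v : ℤ => if P v then (v : ℝ) else -(v : ℝ)) ∘ φ := rfl
    rw [this]; exact measurable_from_top.comp hφ
  have hhm : Measurable h := by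
    have : h = (fun v : ℤ => if P v then (1:ℝ) else -1) ∘ φ := rfl
    rw [this]; exact measurable_from_top.comp hφ
  have hgb : ∀ y, |g y| ≤ (B : ℝ) := by
    intro y
    have := hb y
    have : |(φ y : ℝ)| ≤ (B : ℝ) := by exact_mod_cast (by simpa using this : |φ y| ≤ B)
    by_cases hp : P (φ y) <;> simp [g, hp, abs_neg, this]
  have hhb : ∀ y, |h y| ≤ (1 : ℝ) := by
    intro y; by_cases hp : P (φ y) <;> simp [h, hp]
  have hgi : IntervalIntegrable g volume 0 L := bdd_intervalIntegrable g hgm _ hgb 0 L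
  have hhi : IntervalIntegrable h volume 0 L := bdd_intervalIntegrable h hhm _ hhb 0 L
  refine ⟨∫ y in (0:ℝ)..L, g y, ∫ y in (0:ℝ)..L, h y, fun x hx => ?_⟩
  have key : ∀ y : ℝ, |(φ y : ℝ) + x| = g y + h y * x := by
    intro y
    by_cases hp : P (φ y)
    · simp [g, h, hp, abs_of_nonneg ((hx y).1 hp)]
    · simp only [g, h, hp, if_false]
      rw [abs_of_nonpos ((hx y).2 hp)]; ring
  rw [intervalIntegral.integral_congr (g := fun y => g y + h y * x) (fun y _ => key y)]
  rw [intervalIntegral.integral_add hgi (hhi.mul_const x),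
    intervalIntegral.integral_mul_const]

/-- For a road of length `L` carrying `2M` points, the cost function
`C(z) = ∫_0^L |F(y) + z| dy` is piecewise affine with at most `2M + 2` linear pieces:
there exist integer breakpoints `z₁ < ⋯ < z_m` with `m ≤ 2M + 1` such that `C` is
affine on `(-∞, z₁]`, on each `[z_k, z_{k+1}]`, and on `[z_m, ∞)`. -/
theorem road_cost_piecewise_affine (L : ℝ) (hL : 0 < L) (M : ℕ) (hM : 0 < M)
    (s t : Fin M → ℝ) (hs : ∀ i, s i ∈ Set.Icc 0 L) (ht : ∀ i, t i ∈ Set.Icc 0 L) :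
    ∃ (m : ℕ) (z : Fin (m + 1) → ℤ),
      m + 1 ≤ 2 * M + 1 ∧ StrictMono z ∧
      (∃ α β : ℝ, ∀ x ∈ Set.Iic ((z 0 : ℝ)),
        (∫ y in (0:ℝ)..L, |((((univ.filter fun i => s i < y).card : ℤ)
          - ((univ.filter fun i => t i < y).card : ℤ) : ℤ) : ℝ) + x|) = α + β * x) ∧
      (∀ k : Fin m, ∃ α β : ℝ,
        ∀ x ∈ Set.Icc ((z k.castSucc : ℝ)) ((z k.succ : ℝ)),
        (∫ y in (0:ℝ)..L, |((((univ.filter fun i => s i < y).card : ℤ)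
          - ((univ.filter fun i => t i < y).card : ℤ) : ℤ) : ℝ) + x|) = α + β * x) ∧
      (∃ α β : ℝ, ∀ x ∈ Set.Ici ((z (Fin.last m) : ℝ)),
        (∫ y in (0:ℝ)..L, |((((univ.filter fun i => s i < y).card : ℤ)
          - ((univ.filter fun i => t i < y).card : ℤ) : ℤ) : ℝ) + x|) = α + β * x) := by
  classical
  set F : ℝ → ℤ := fun y => (((univ.filter fun i => s i < y).card : ℤ)
    - ((univ.filter fun i => t i < y).card : ℤ)) with hF
  have hcount : ∀ u : Fin M → ℝ, Measurable fun y : ℝ =>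
      ((univ.filter fun i => u i < y).card : ℤ) := by
    intro u
    have heq : (fun y : ℝ => ((univ.filter fun i => u i < y).card : ℤ)) =
        fun y => ∑ i : Fin M, if u i < y then (1:ℤ) else 0 := by
      funext y
      rw [Finset.card_filter]
      push_cast
      rfl
    rw [heq]
    exact Finset.measurable_sum _ fun i _ =>
      Measurable.ite measurableSet_Ioi measurable_const measurable_const
  have hFm : Measurable F := (hcount s).sub (hcount t)
  have hcard : ∀ u : Fin M → ℝ, ∀ y : ℝ, (univ.filter fun i => u i < y).card ≤ M := by
    intro u y
    calc (univ.filter fun i => u i < y).card ≤ (univ : Finset (Fin M)).card :=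
        Finset.card_filter_le _ _
      _ = M := by simp
  have hFb : ∀ y, |F y| ≤ (M : ℤ) := by
    intro y
    have h1 := hcard s y
    have h2 := hcard t y
    simp only [hF]
    rw [abs_le]
    omega
  refine ⟨2 * M, fun j => (j : ℤ) - M, le_refl _, ?_, ?_, ?_, ?_⟩
  · intro i j hij
    have : (i : ℕ) < (j : ℕ) := hij
    have : ((i : ℕ) : ℤ) < ((j : ℕ) : ℤ) := by exact_mod_cast this
    show (i : ℤ) - M < (j : ℤ) - M
    omega
  · -- left piece: x ≤ -M
    obtain ⟨α, β, hab⟩ := affine_piece F hFm M hFb L (fun _ => False)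
    refine ⟨α, β, fun x hx => ?_⟩
    refine hab x fun y => ⟨fun h => h.elim, fun _ => ?_⟩
    have h1 : (F y : ℝ) ≤ (M : ℝ) := by exact_mod_cast (abs_le.1 (hFb y)).2
    have h2 : x ≤ -(M : ℝ) := by
      have := hx
      simp only [Set.mem_Iic] at this
      calc x ≤ (((0 : Fin (2*M+1)) : ℤ) - M : ℝ) := by exact_mod_cast this
        _ = -(M:ℝ) := by norm_num
    linarith
  · -- middle pieces
    intro k
    set a : ℤ := (k : ℤ) - M with ha
    obtain ⟨α, β, hab⟩ := affine_piece F hFm M hFb L (fun v => -a ≤ v)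
    refine ⟨α, β, fun x hx => ?_⟩
    have hxl : (a : ℝ) ≤ x := by
      have := hx.1
      simpa [ha, Fin.coe_castSucc] using this
    have hxr : x ≤ (a : ℝ) + 1 := by
      have := hx.2
      have h2 : x ≤ (((k : ℤ) + 1 - M : ℤ) : ℝ) := by
        simpa [Fin.val_succ] using this
      rw [ha]
      push_cast
      push_cast [ha] at hxl h2
      linarith
    refine hab x fun y => ⟨fun h => ?_, fun h => ?_⟩
    · have : (-(a:ℝ)) ≤ (F y : ℝ) := by exact_mod_cast h
      linarith
    · push_neg at h
      have h' : F y ≤ -a - 1 := by omega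
      have : (F y : ℝ) ≤ -(a:ℝ) - 1 := by exact_mod_cast h'
      linarith
  · -- right piece: x ≥ M
    obtain ⟨α, β, hab⟩ := affine_piece F hFm M hFb L (fun _ => True)
    refine ⟨α, β, fun x hx => ?_⟩
    refine hab x fun y => ⟨fun _ => ?_, fun h => (h trivial).elim⟩
    have h1 : -(M : ℝ) ≤ (F y : ℝ) := by exact_mod_cast (abs_le.1 (hFb y)).1
    have h2 : (M : ℝ) ≤ x := by
      have := hx
      simp only [Set.mem_Ici] at this
      have : (((Fin.last (2*M) : Fin (2*M+1)) : ℤ) - M : ℝ) ≤ x := by exact_mod_cast this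
      simpa [Fin.val_last, two_mul] using this
    linarith
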